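/- Suppose T is in case 1 (k < 0 and M < m) and let I_h(t) = a·e^{kt} + (b_m + b_M)/2. Then, besides the indices m and M, the max-norm error is attained at a third observation: either there exists an index r with t_r < t_m and ‖T − I_h(𝔱)‖_∞ = −(T_r − I_h(t_r)), or there exists an index r with t_r > t_M and ‖T − I_h(𝔱)‖_∞ = T_r − I_h(t_r). -/
import Mathlib


/-- In case 1 (`k < 0` and `M < m`), besides the indices `m` and
`M`, the max-norm error of `I_h(t) = a·e^{kt} + (b_m + b_M)/2` is attained at a
third observation: either there is an index `r` with `t_r < t_m` and
`‖T − I_h(𝔱)‖_∞ = −(T_r − I_h(t_r))`, or there is an index `r` with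
`t_r > t_M` and `‖T − I_h(𝔱)‖_∞ = T_r − I_h(t_r)`. -/
theorem case1_third_critical_point {n : ℕ}
    (t : Fin n → ℝ) (ht : StrictMono t) (T : Fin n → ℝ)
    (k : ℝ) (hk : k < 0)
    (m M : Fin n)
    (hm_min : ∀ i, T m ≤ T i) (hm_first : ∀ i, T i = T m → m ≤ i)
    (hM_max : ∀ i, T i ≤ T M) (hM_last : ∀ i, T i = T M → i ≤ M)
    (hMm : M < m)
    (a : ℝ)
    (ha_mem :
      (∃ i, i < m ∧ a = (T i - T m) / (Real.exp (k * t i) - Real.exp (k * t m))) ∨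
      (∃ j, M < j ∧ a = (T j - T M) / (Real.exp (k * t j) - Real.exp (k * t M))))
    (ha_min :
      (∀ i, i < m → a ≤ (T i - T m) / (Real.exp (k * t i) - Real.exp (k * t m))) ∧
      (∀ j, M < j → a ≤ (T j - T M) / (Real.exp (k * t j) - Real.exp (k * t M))))
    (bm bM : ℝ)
    (hbm : bm = T m - a * Real.exp (k * t m))
    (hbM : bM = T M - a * Real.exp (k * t M)) :
    (∃ r : Fin n, t r < t m ∧
      ‖T - (fun i => a * Real.exp (k * t i) + (bm + bM) / 2)‖ =
        -(T r - (a * Real.exp (k * t r) + (bm + bM) / 2))) ∨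
    (∃ r : Fin n, t M < t r ∧
      ‖T - (fun i => a * Real.exp (k * t i) + (bm + bM) / 2)‖ =
        T r - (a * Real.exp (k * t r) + (bm + bM) / 2)) := by
  -- exp is antitone in t
  have hexp : ∀ i j : Fin n, i < j → Real.exp (k * t j) < Real.exp (k * t i) := by
    intro i j hij
    exact Real.exp_lt_exp.2 (by nlinarith [ht hij])
  -- a ≥ 0
  have ha0 : 0 ≤ a := by
    rcases ha_mem with ⟨i, him, hi⟩ | ⟨j, hjM, hj⟩
    · have hd : 0 < Real.exp (k * t i) - Real.exp (k * t m) :=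
        sub_pos.2 (hexp i m him)
      exact hi ▸ div_nonneg (sub_nonneg.2 (hm_min i)) hd.le
    · have hd : Real.exp (k * t j) - Real.exp (k * t M) < 0 :=
        sub_neg.2 (hexp M j hjM)
      exact hj ▸ div_nonneg_of_nonpos (sub_nonpos.2 (hM_max j)) hd.le
  -- lower bound: ∀ i, bm ≤ T i - a * exp (k * t i)
  have hlow : ∀ i, bm ≤ T i - a * Real.exp (k * t i) := by
    intro i
    rcases lt_trichotomy i m with h | h | h
    · have hd : 0 < Real.exp (k * t i) - Real.exp (k * t m) :=
        sub_pos.2 (hexp i m h)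
      have := (le_div_iff₀ hd).1 (ha_min.1 i h)
      rw [hbm]; nlinarith
    · rw [h, hbm]
    · have hd : Real.exp (k * t i) - Real.exp (k * t m) < 0 :=
        sub_neg.2 (hexp m i h)
      have h1 : T m ≤ T i := hm_min i
      rw [hbm]; nlinarith
  -- upper bound: ∀ i, T i - a * exp (k * t i) ≤ bM
  have hup : ∀ i, T i - a * Real.exp (k * t i) ≤ bM := by
    intro i
    rcases lt_trichotomy M i with h | h | h
    · have hd : Real.exp (k * t i) - Real.exp (k * t M) < 0 :=
        sub_neg.2 (hexp M i h)
      have := (le_div_iff_of_neg hd).1 (ha_min.2 i h)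
      rw [hbM]; nlinarith
    · rw [← h, hbM]
    · have hd : 0 < Real.exp (k * t i) - Real.exp (k * t M) :=
        sub_pos.2 (hexp i M h)
      have h1 : T i ≤ T M := hM_max i
      rw [hbM]; nlinarith
  have hbmM : bm ≤ bM := le_trans (hlow M) (by rw [hbM])
  set E : Fin n → ℝ := T - (fun i => a * Real.exp (k * t i) + (bm + bM) / 2) with hE
  have hEi : ∀ i, E i = T i - a * Real.exp (k * t i) - (bm + bM) / 2 := by
    intro i; simp [hE]; ring
  have hnorm : ‖E‖ = (bM - bm) / 2 := by
    have hle : ‖E‖ ≤ (bM - bm) / 2 := by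
      refine (pi_norm_le_iff_of_nonneg (by linarith)).2 ?_
      intro i
      rw [Real.norm_eq_abs, abs_le, hEi i]
      constructor <;> [nlinarith [hlow i]; nlinarith [hup i]]
    have hge : (bM - bm) / 2 ≤ ‖E‖ := by
      have := norm_le_pi_norm E M
      rw [Real.norm_eq_abs, hEi M, hbM] at this
      calc (bM - bm) / 2 = |T M - a * Real.exp (k * t M) - (bm + bM) / 2| := by
            rw [hbM] at hbmM ⊢
            rw [abs_of_nonneg (by linarith)]; linarith
        _ ≤ ‖E‖ := by rw [hbM]; exact this
    linarith
  rcases ha_mem with ⟨r, hrm, hr⟩ | ⟨r, hrM, hr⟩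
  · left
    refine ⟨r, ht hrm, ?_⟩
    have hd : 0 < Real.exp (k * t r) - Real.exp (k * t m) :=
      sub_pos.2 (hexp r m hrm)
    have heq : a * (Real.exp (k * t r) - Real.exp (k * t m)) = T r - T m := by
      rw [hr, div_mul_cancel₀ _ hd.ne']
    rw [hnorm]
    nlinarith [heq, hbm, hbM]
  · right
    refine ⟨r, ht hrM, ?_⟩
    have hd : Real.exp (k * t r) - Real.exp (k * t M) < 0 :=
      sub_neg.2 (hexp M r hrM)
    have heq : a * (Real.exp (k * t r) - Real.exp (k * t M)) = T r - T M := by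
      rw [hr, div_mul_cancel₀ _ hd.ne]
    rw [hnorm]
    nlinarith [heq, hbm, hbM]
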